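/- arXiv:1806.08772 — 3 statements merged into one kernel-verified Lean document; each statement's English description precedes it below -/
import Mathlib

section
/- Let ξ ∈ ℝ³ with |(ξ₁,ξ₂)| > 0, let η₁, η₂ be the orthonormal vectors η₁ = (1/|ξ'|)(ξ₂,-ξ₁,0), η₂ = η₁ × (ξ/|ξ|), let k > 0, τ ≥ 1 with τ² ≥ |ξ|²/4 and τ ≥ k, and define the complex vectors ζ₁ = ξ/2 + i√(τ² + |ξ|²/4) η₁ + √(τ² + k²) η₂ and ζ₂ = -ξ/2 - i√(τ² + |ξ|²/4) η₁ + √(τ² + k²) η₂ (with real vectors viewed in ℂ³). Then ζ₁ · ζ₁ = k², ζ₂ · ζ₂ = k², and iζ₁ + conj(iζ₂) = iξ. -/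
set_option maxHeartbeats 1000000


open Matrix Complex

noncomputable section

def nrm (x : Fin 3 → ℝ) : ℝ := Real.sqrt (x ⬝ᵥ x)

/-- View a real 3-vector as a complex 3-vector. -/
def cv (x : Fin 3 → ℝ) : Fin 3 → ℂ := fun j => (x j : ℂ)

theorem stmt_1 (ξ η₁ η₂ : Fin 3 → ℝ) (k τ : ℝ)
    (hξ' : nrm ![ξ 0, ξ 1, 0] > 0)
    (hη₁ : η₁ = (1 / nrm ![ξ 0, ξ 1, 0]) • ![ξ 1, -ξ 0, 0])
    (hη₂ : η₂ = crossProduct η₁ ((1 / nrm ξ) • ξ))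
    (hk : 0 < k) (hτ : 1 ≤ τ) (hτξ : (nrm ξ)^2 / 4 ≤ τ^2) (hτk : k ≤ τ)
    (ζ₁ ζ₂ : Fin 3 → ℂ)
    (hζ₁ : ζ₁ = fun j => (ξ j : ℂ) / 2
        + Complex.I * (Real.sqrt (τ^2 + (nrm ξ)^2 / 4) : ℝ) * (η₁ j : ℂ)
        + (Real.sqrt (τ^2 + k^2) : ℝ) * (η₂ j : ℂ))
    (hζ₂ : ζ₂ = fun j => -(ξ j : ℂ) / 2
        - Complex.I * (Real.sqrt (τ^2 + (nrm ξ)^2 / 4) : ℝ) * (η₁ j : ℂ)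
        + (Real.sqrt (τ^2 + k^2) : ℝ) * (η₂ j : ℂ)) :
    ζ₁ ⬝ᵥ ζ₁ = (k : ℂ)^2 ∧ ζ₂ ⬝ᵥ ζ₂ = (k : ℂ)^2 ∧
      (fun j => Complex.I * ζ₁ j + starRingEnd ℂ (Complex.I * ζ₂ j))
        = fun j => Complex.I * (ξ j : ℂ) := by
  have hn'0 : 0 ≤ ξ 0 ^ 2 + ξ 1 ^ 2 := by positivity
  have hn' : (nrm ![ξ 0, ξ 1, 0])^2 = ξ 0 ^ 2 + ξ 1 ^ 2 := by
    simp [nrm, dotProduct, Fin.sum_univ_three]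
    rw [Real.sq_sqrt] <;> nlinarith
  have hn : (nrm ξ)^2 = ξ 0 ^ 2 + ξ 1 ^ 2 + ξ 2 ^ 2 := by
    simp [nrm, dotProduct, Fin.sum_univ_three]
    rw [Real.sq_sqrt] <;> nlinarith
  have hne : nrm ![ξ 0, ξ 1, 0] ≠ 0 := ne_of_gt hξ'
  have hnξ : nrm ξ ≠ 0 := by
    intro h; rw [h] at hn; simp at hn
    nlinarith [sq_nonneg (ξ 2), hξ', hn']
  set S := Real.sqrt (τ^2 + (nrm ξ)^2 / 4) with hSdef
  set T := Real.sqrt (τ^2 + k^2) with hTdef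
  have hs : S^2 = τ^2 + (nrm ξ)^2 / 4 := Real.sq_sqrt (by positivity)
  have ht : T^2 = τ^2 + k^2 := Real.sq_sqrt (by positivity)
  -- orthonormality (real)
  have e11 : η₁ 0 ^2 + η₁ 1 ^2 + η₁ 2 ^2 = 1 := by
    subst hη₁; simp; field_simp; linarith [hn']
  have eξ1 : ξ 0 * η₁ 0 + ξ 1 * η₁ 1 + ξ 2 * η₁ 2 = 0 := by
    subst hη₁; simp; ring
  have hη₂' : η₂ 0 = (η₁ 1 * ξ 2) / nrm ξ ∧ η₂ 1 = -(η₁ 0 * ξ 2) / nrm ξ ∧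
      η₂ 2 = (η₁ 0 * ξ 1 - η₁ 1 * ξ 0) / nrm ξ := by
    rw [hη₂, hη₁]; simp [crossProduct]
    refine ⟨by field_simp, by field_simp, by field_simp⟩
  obtain ⟨h20, h21, h22⟩ := hη₂'
  have e22 : η₂ 0 ^2 + η₂ 1 ^2 + η₂ 2 ^2 = 1 := by
    rw [h20, h21, h22]; field_simp
    have hη₁0 : η₁ 0 = ξ 1 / nrm ![ξ 0, ξ 1, 0] := by rw [hη₁]; simp; ring
    have hη₁1 : η₁ 1 = -ξ 0 / nrm ![ξ 0, ξ 1, 0] := by rw [hη₁]; simp; ring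
    rw [hη₁0, hη₁1]; field_simp
    linear_combination (-(ξ 0^2+ξ 1^2)) * hn - (nrm ξ)^2 * hn'
  have eξ2 : ξ 0 * η₂ 0 + ξ 1 * η₂ 1 + ξ 2 * η₂ 2 = 0 := by
    rw [h20, h21, h22]; field_simp; ring
  have e12 : η₁ 0 * η₂ 0 + η₁ 1 * η₂ 1 + η₁ 2 * η₂ 2 = 0 := by
    have hη₁2 : η₁ 2 = 0 := by rw [hη₁]; simp
    rw [h20, h21, h22, hη₁2]; field_simp; ring
  have hξξ : ξ 0 ^2 + ξ 1 ^2 + ξ 2 ^2 = (nrm ξ)^2 := hn.symm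
  -- cast to ℂ
  have C : ∀ x : ℝ, ((x:ℂ)) = (x:ℂ) := fun _ => rfl
  refine ⟨?_, ?_, ?_⟩
  · rw [hζ₁]
    simp only [dotProduct, Fin.sum_univ_three]
    have c11 : (η₁ 0 :ℂ)^2 + (η₁ 1:ℂ)^2 + (η₁ 2:ℂ)^2 = 1 := by exact_mod_cast congrArg (Complex.ofReal) e11
    have c22 : (η₂ 0 :ℂ)^2 + (η₂ 1:ℂ)^2 + (η₂ 2:ℂ)^2 = 1 := by exact_mod_cast congrArg (Complex.ofReal) e22
    have c12 : (η₁ 0 :ℂ)*(η₂ 0) + (η₁ 1:ℂ)*(η₂ 1) + (η₁ 2:ℂ)*(η₂ 2) = 0 := by exact_mod_cast congrArg (Complex.ofReal) e12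
    have cξ1 : (ξ 0 :ℂ)*(η₁ 0) + (ξ 1:ℂ)*(η₁ 1) + (ξ 2:ℂ)*(η₁ 2) = 0 := by exact_mod_cast congrArg (Complex.ofReal) eξ1
    have cξ2 : (ξ 0 :ℂ)*(η₂ 0) + (ξ 1:ℂ)*(η₂ 1) + (ξ 2:ℂ)*(η₂ 2) = 0 := by exact_mod_cast congrArg (Complex.ofReal) eξ2
    have cξξ : (ξ 0 :ℂ)^2 + (ξ 1:ℂ)^2 + (ξ 2:ℂ)^2 = ((nrm ξ :ℝ):ℂ)^2 := by exact_mod_cast congrArg (Complex.ofReal) hξξ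
    have cs : ((S:ℝ):ℂ)^2 = (τ:ℂ)^2 + ((nrm ξ:ℝ):ℂ)^2/4 := by exact_mod_cast congrArg (Complex.ofReal) hs
    have ct : ((T:ℝ):ℂ)^2 = (τ:ℂ)^2 + (k:ℂ)^2 := by exact_mod_cast congrArg (Complex.ofReal) ht
    linear_combination (1/4:ℂ) * cξξ + (Complex.I*S)^2 * c11 + (T:ℂ)^2 * c22
      + Complex.I*S*cξ1 + (T:ℂ)*cξ2 + 2*Complex.I*S*T*c12 + Complex.I^2*cs + ct
      + ((τ:ℂ)^2 + ((nrm ξ:ℝ):ℂ)^2/4)*Complex.I_sq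
  · rw [hζ₂]
    simp only [dotProduct, Fin.sum_univ_three]
    have c11 : (η₁ 0 :ℂ)^2 + (η₁ 1:ℂ)^2 + (η₁ 2:ℂ)^2 = 1 := by exact_mod_cast congrArg (Complex.ofReal) e11
    have c22 : (η₂ 0 :ℂ)^2 + (η₂ 1:ℂ)^2 + (η₂ 2:ℂ)^2 = 1 := by exact_mod_cast congrArg (Complex.ofReal) e22
    have c12 : (η₁ 0 :ℂ)*(η₂ 0) + (η₁ 1:ℂ)*(η₂ 1) + (η₁ 2:ℂ)*(η₂ 2) = 0 := by exact_mod_cast congrArg (Complex.ofReal) e12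
    have cξ1 : (ξ 0 :ℂ)*(η₁ 0) + (ξ 1:ℂ)*(η₁ 1) + (ξ 2:ℂ)*(η₁ 2) = 0 := by exact_mod_cast congrArg (Complex.ofReal) eξ1
    have cξ2 : (ξ 0 :ℂ)*(η₂ 0) + (ξ 1:ℂ)*(η₂ 1) + (ξ 2:ℂ)*(η₂ 2) = 0 := by exact_mod_cast congrArg (Complex.ofReal) eξ2
    have cξξ : (ξ 0 :ℂ)^2 + (ξ 1:ℂ)^2 + (ξ 2:ℂ)^2 = ((nrm ξ :ℝ):ℂ)^2 := by exact_mod_cast congrArg (Complex.ofReal) hξξ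
    have cs : ((S:ℝ):ℂ)^2 = (τ:ℂ)^2 + ((nrm ξ:ℝ):ℂ)^2/4 := by exact_mod_cast congrArg (Complex.ofReal) hs
    have ct : ((T:ℝ):ℂ)^2 = (τ:ℂ)^2 + (k:ℂ)^2 := by exact_mod_cast congrArg (Complex.ofReal) ht
    linear_combination (1/4:ℂ) * cξξ + (Complex.I*S)^2 * c11 + (T:ℂ)^2 * c22
      + Complex.I*S*cξ1 - (T:ℂ)*cξ2 - 2*Complex.I*S*T*c12 + Complex.I^2*cs + ct
      + ((τ:ℂ)^2 + ((nrm ξ:ℝ):ℂ)^2/4)*Complex.I_sq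
  · funext j
    rw [hζ₁, hζ₂]
    simp only [map_add, map_sub, _root_.map_mul, map_neg, map_div₀, Complex.conj_I,
      Complex.conj_ofReal, map_ofNat]
    ring
end
end

section
/- Let ξ ∈ ℝ³ with |(ξ₁,ξ₂)| > 0, η₁ = (1/|ξ'|)(ξ₂,-ξ₁,0), η₂ = η₁ × (ξ/|ξ|), k > 0, and τ > max(k, |ξ|/2). Define ζ₁ = ξ/2 + √(τ² - |ξ|²/4) η₁ - i√(τ² - k²) η₂ and ζ₂ = -ξ/2 + √(τ² - |ξ|²/4) η₁ + i√(τ² - k²) η₂. Then ζ₁·ζ₁ = k², ζ₂·ζ₂ = k², iζ₁ + conj(iζ₂) = iξ, and lim_{τ→∞} ζ₁/τ = lim_{τ→∞} conj(ζ₂)/τ = η₁ - iη₂. -/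
open Matrix Complex Filter

noncomputable section

lemma sqrt_div_tendsto (c : ℝ) :
    Tendsto (fun τ : ℝ => Real.sqrt (τ^2 - c) / τ) atTop (nhds 1) := by
  have h : ∀ᶠ τ : ℝ in atTop, Real.sqrt (τ^2 - c) / τ = Real.sqrt (1 - c/τ^2) := by
    filter_upwards [eventually_gt_atTop (0:ℝ)] with τ hτ
    rw [show τ^2 - c = (1 - c/τ^2) * τ^2 by field_simp, Real.sqrt_mul' _ (sq_nonneg τ),
      Real.sqrt_sq hτ.le, mul_div_assoc, div_self hτ.ne', mul_one]
  rw [tendsto_congr' h]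
  have h2 : Tendsto (fun τ : ℝ => 1 - c/τ^2) atTop (nhds 1) := by
    have := (tendsto_const_nhds (x := c) (f := atTop (α := ℝ))).div_atTop
      (tendsto_pow_atTop (two_ne_zero))
    simpa using tendsto_const_nhds.sub this
  have := (Real.continuous_sqrt.tendsto 1).comp h2
  simpa [Function.comp_def] using this

lemma sqrt_div_tendstoC (c : ℝ) :
    Tendsto (fun τ : ℝ => ((Real.sqrt (τ^2 - c) : ℝ) : ℂ) / (τ : ℂ)) atTop (nhds 1) := by
  have := (Complex.continuous_ofReal.tendsto 1).comp (sqrt_div_tendsto c)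
  simp only [Function.comp_def] at this
  convert this using 2 <;> push_cast <;> simp

lemma inv_tendstoC : Tendsto (fun τ : ℝ => ((τ : ℂ))⁻¹) atTop (nhds 0) := by
  have := (Complex.continuous_ofReal.tendsto 0).comp tendsto_inv_atTop_zero
  simp only [Function.comp_def] at this
  convert this using 2 <;> push_cast <;> simp

set_option maxHeartbeats 1000000 in
theorem stmt_3 (ξ η₁ η₂ : Fin 3 → ℝ) (k : ℝ)
    (hξ' : nrm ![ξ 0, ξ 1, 0] > 0)
    (hη₁ : η₁ = (1 / nrm ![ξ 0, ξ 1, 0]) • ![ξ 1, -ξ 0, 0])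
    (hη₂ : η₂ = crossProduct η₁ ((1 / nrm ξ) • ξ))
    (hk : 0 < k)
    (ζ₁ ζ₂ : ℝ → Fin 3 → ℂ)
    (hζ₁ : ∀ τ, ζ₁ τ = fun j => (ξ j : ℂ) / 2
        + (Real.sqrt (τ^2 - (nrm ξ)^2 / 4) : ℝ) * (η₁ j : ℂ)
        - Complex.I * (Real.sqrt (τ^2 - k^2) : ℝ) * (η₂ j : ℂ))
    (hζ₂ : ∀ τ, ζ₂ τ = fun j => -(ξ j : ℂ) / 2
        + (Real.sqrt (τ^2 - (nrm ξ)^2 / 4) : ℝ) * (η₁ j : ℂ)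
        + Complex.I * (Real.sqrt (τ^2 - k^2) : ℝ) * (η₂ j : ℂ)) :
    (∀ τ : ℝ, τ > max k (nrm ξ / 2) →
      ζ₁ τ ⬝ᵥ ζ₁ τ = (k : ℂ)^2 ∧ ζ₂ τ ⬝ᵥ ζ₂ τ = (k : ℂ)^2 ∧
      (fun j => Complex.I * ζ₁ τ j + starRingEnd ℂ (Complex.I * ζ₂ τ j))
        = fun j => Complex.I * (ξ j : ℂ)) ∧
    Tendsto (fun τ : ℝ => fun j => ζ₁ τ j / (τ : ℂ)) atTop
      (nhds (fun j => (η₁ j : ℂ) - Complex.I * (η₂ j : ℂ))) ∧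
    Tendsto (fun τ : ℝ => fun j => starRingEnd ℂ (ζ₂ τ j) / (τ : ℂ)) atTop
      (nhds (fun j => (η₁ j : ℂ) - Complex.I * (η₂ j : ℂ))) := by
  set r := nrm ![ξ 0, ξ 1, 0] with hr
  set s := nrm ξ with hsdef
  have hdot : ∀ x : Fin 3 → ℝ, nrm x ^ 2 = x 0^2 + x 1^2 + x 2^2 := by
    intro x
    rw [nrm, Real.sq_sqrt]
    · simp [dotProduct, Fin.sum_univ_three]; ring
    · simp only [dotProduct, Fin.sum_univ_three]
      nlinarith [sq_nonneg (x 0), sq_nonneg (x 1), sq_nonneg (x 2)]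
  have hr2 : r^2 = ξ 0^2 + ξ 1^2 := by rw [hr, hdot]; simp
  have hs2 : s^2 = ξ 0^2 + ξ 1^2 + ξ 2^2 := by rw [hsdef, hdot]
  have hr0 : 0 < r := hξ'
  have hs0 : 0 < s := by
    have h0 : 0 ≤ s := by rw [hsdef, nrm]; exact Real.sqrt_nonneg _
    nlinarith [sq_nonneg (ξ 2)]
  -- components
  have e10 : η₁ 0 = ξ 1 / r := by rw [hη₁]; simp [div_eq_inv_mul]
  have e11 : η₁ 1 = -ξ 0 / r := by rw [hη₁]; simp [div_eq_inv_mul]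
  have e12 : η₁ 2 = 0 := by rw [hη₁]; simp
  have e20 : η₂ 0 = -(ξ 0 * ξ 2) / (r * s) := by
    rw [hη₂, cross_apply]; simp [e10, e11, e12]; field_simp
  have e21 : η₂ 1 = -(ξ 1 * ξ 2) / (r * s) := by
    rw [hη₂, cross_apply]; simp [e10, e11, e12]; field_simp
  have e22 : η₂ 2 = (ξ 0^2 + ξ 1^2) / (r * s) := by
    rw [hη₂, cross_apply]; simp [e10, e11, e12]; field_simp; ring
  -- dot product facts (real)
  have H1 : η₁ 0^2 + η₁ 1^2 + η₁ 2^2 = 1 := by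
    rw [e10, e11, e12]; field_simp; linarith [hr2]
  have H2 : η₂ 0^2 + η₂ 1^2 + η₂ 2^2 = 1 := by
    rw [e20, e21, e22]; field_simp; nlinarith [hr2, hs2]
  have H12 : η₁ 0 * η₂ 0 + η₁ 1 * η₂ 1 + η₁ 2 * η₂ 2 = 0 := by
    rw [e10, e11, e12, e20, e21, e22]; field_simp; ring
  have Hx1 : ξ 0 * η₁ 0 + ξ 1 * η₁ 1 + ξ 2 * η₁ 2 = 0 := by
    rw [e10, e11, e12]; field_simp; ring
  have Hx2 : ξ 0 * η₂ 0 + ξ 1 * η₂ 1 + ξ 2 * η₂ 2 = 0 := by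
    rw [e20, e21, e22]; field_simp; ring
  -- cast to ℂ
  have C1 : ((η₁ 0 : ℂ))^2 + (η₁ 1 : ℂ)^2 + (η₁ 2 : ℂ)^2 = 1 := by
    exact_mod_cast congrArg (Complex.ofReal) H1
  have C2 : ((η₂ 0 : ℂ))^2 + (η₂ 1 : ℂ)^2 + (η₂ 2 : ℂ)^2 = 1 := by
    exact_mod_cast congrArg (Complex.ofReal) H2
  have C12 : (η₁ 0 : ℂ) * η₂ 0 + (η₁ 1 : ℂ) * η₂ 1 + (η₁ 2 : ℂ) * η₂ 2 = 0 := by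
    exact_mod_cast congrArg (Complex.ofReal) H12
  have Cx1 : (ξ 0 : ℂ) * η₁ 0 + (ξ 1 : ℂ) * η₁ 1 + (ξ 2 : ℂ) * η₁ 2 = 0 := by
    exact_mod_cast congrArg (Complex.ofReal) Hx1
  have Cx2 : (ξ 0 : ℂ) * η₂ 0 + (ξ 1 : ℂ) * η₂ 1 + (ξ 2 : ℂ) * η₂ 2 = 0 := by
    exact_mod_cast congrArg (Complex.ofReal) Hx2
  have Cs : (ξ 0 : ℂ)^2 + (ξ 1 : ℂ)^2 + (ξ 2 : ℂ)^2 = (s : ℂ)^2 := by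
    exact_mod_cast congrArg (Complex.ofReal) hs2.symm
  refine ⟨fun τ hτ => ?_, ?_, ?_⟩
  · have hτk : k ≤ τ := le_of_lt (lt_of_le_of_lt (le_max_left _ _) hτ)
    have hτs : s/2 ≤ τ := le_of_lt (lt_of_le_of_lt (le_max_right _ _) hτ)
    have hτ0 : 0 < τ := lt_of_lt_of_le hk hτk
    set a := Real.sqrt (τ^2 - s^2/4) with ha
    set b := Real.sqrt (τ^2 - k^2) with hb
    have Ha : (a : ℂ)^2 = (τ:ℂ)^2 - (s:ℂ)^2/4 := by
      have : a^2 = τ^2 - s^2/4 := Real.sq_sqrt (by nlinarith)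
      exact_mod_cast congrArg Complex.ofReal this
    have Hb : (b : ℂ)^2 = (τ:ℂ)^2 - (k:ℂ)^2 := by
      have : b^2 = τ^2 - k^2 := Real.sq_sqrt (by nlinarith)
      exact_mod_cast congrArg Complex.ofReal this
    have HI : (Complex.I)^2 = -1 := Complex.I_sq
    refine ⟨?_, ?_, ?_⟩
    · rw [hζ₁]
      simp only [dotProduct, Fin.sum_univ_three]
      linear_combination (1/4 : ℂ) * Cs + (a:ℂ)^2 * C1 + Complex.I^2 * (b:ℂ)^2 * C2
        + (a:ℂ) * Cx1 - Complex.I * (b:ℂ) * Cx2 - 2 * Complex.I * (a:ℂ) * (b:ℂ) * C12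
        + Ha + (b:ℂ)^2 * HI - Hb
    · rw [hζ₂]
      simp only [dotProduct, Fin.sum_univ_three]
      linear_combination (1/4 : ℂ) * Cs + (a:ℂ)^2 * C1 + Complex.I^2 * (b:ℂ)^2 * C2
        - (a:ℂ) * Cx1 - Complex.I * (b:ℂ) * Cx2 + 2 * Complex.I * (a:ℂ) * (b:ℂ) * C12
        + Ha + (b:ℂ)^2 * HI - Hb
    · funext j
      rw [hζ₁, hζ₂]
      simp only [map_add, map_sub, _root_.map_mul, map_neg, map_div₀, Complex.conj_I,
        Complex.conj_ofReal, map_ofNat]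
      ring
  · rw [tendsto_pi_nhds]
    intro j
    have heq : ∀ τ : ℝ, ζ₁ τ j / (τ:ℂ) = (ξ j : ℂ)/2 * (τ:ℂ)⁻¹
        + ((Real.sqrt (τ^2 - s^2/4) : ℝ):ℂ)/(τ:ℂ) * (η₁ j : ℂ)
        - Complex.I * (((Real.sqrt (τ^2 - k^2) : ℝ):ℂ)/(τ:ℂ)) * (η₂ j : ℂ) := by
      intro τ; rw [hζ₁]; ring
    simp only [heq]
    have t1 : Tendsto (fun τ : ℝ => (ξ j : ℂ)/2 * (τ:ℂ)⁻¹) atTop (nhds 0) := by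
      simpa using inv_tendstoC.const_mul ((ξ j : ℂ)/2)
    have t2 := (sqrt_div_tendstoC (s^2/4)).mul_const ((η₁ j : ℂ))
    have t3 := ((sqrt_div_tendstoC (k^2)).const_mul Complex.I).mul_const ((η₂ j : ℂ))
    have := (t1.add t2).sub t3
    simpa using this
  · rw [tendsto_pi_nhds]
    intro j
    have heq : ∀ τ : ℝ, starRingEnd ℂ (ζ₂ τ j) / (τ:ℂ) = -(ξ j : ℂ)/2 * (τ:ℂ)⁻¹
        + ((Real.sqrt (τ^2 - s^2/4) : ℝ):ℂ)/(τ:ℂ) * (η₁ j : ℂ)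
        - Complex.I * (((Real.sqrt (τ^2 - k^2) : ℝ):ℂ)/(τ:ℂ)) * (η₂ j : ℂ) := by
      intro τ
      rw [hζ₂]
      simp only [map_add, map_sub, _root_.map_mul, map_neg, map_div₀, Complex.conj_I,
        Complex.conj_ofReal, map_ofNat]
      ring
    simp only [heq]
    have t1 : Tendsto (fun τ : ℝ => -(ξ j : ℂ)/2 * (τ:ℂ)⁻¹) atTop (nhds 0) := by
      simpa using inv_tendstoC.const_mul (-(ξ j : ℂ)/2)
    have t2 := (sqrt_div_tendstoC (s^2/4)).mul_const ((η₁ j : ℂ))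
    have t3 := ((sqrt_div_tendstoC (k^2)).const_mul Complex.I).mul_const ((η₂ j : ℂ))
    have := (t1.add t2).sub t3
    simpa using this
end
end

section
/- With ζ₁, ζ₂ as in the previous statement (phase vectors for Theorem 2 with parameters τ > max(k,|ξ|/2)), for every x ∈ ℝ³ with 0 ≤ x₃: Re(iζ₁·x + conj(iζ₂)·(x₁,x₂,2L-x₃)) = -2√(τ² - k²)(|ξ'|/|ξ|)(L - x₃). In particular, for 0 ≤ x₃ ≤ L this real part is ≤ 0 and tends to -∞ as τ → ∞ whenever x₃ < L. -/
open Matrix Complex Filter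

noncomputable section

lemma dp_self_nonneg (x : Fin 3 → ℝ) : 0 ≤ x ⬝ᵥ x := by
  have h : x ⬝ᵥ x = x 0 ^ 2 + x 1 ^ 2 + x 2 ^ 2 := by
    simp [dotProduct, Fin.sum_univ_three]; ring
  rw [h]; positivity

lemma dotre (a b : ℝ) (ξ η₁ η₂ x y : Fin 3 → ℝ) :
    (Complex.I * ((fun j => (ξ j : ℂ) / 2 + (a:ℂ) * (η₁ j : ℂ) - Complex.I * (b:ℂ) * (η₂ j : ℂ)) ⬝ᵥ cv x)
      + (fun j => starRingEnd ℂ (Complex.I * (-(ξ j : ℂ) / 2 + (a:ℂ) * (η₁ j : ℂ) + Complex.I * (b:ℂ) * (η₂ j : ℂ)))) ⬝ᵥ cv y).re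
    = b * (η₂ 0 * (x 0 - y 0) + η₂ 1 * (x 1 - y 1) + η₂ 2 * (x 2 - y 2)) := by
  simp [cv, dotProduct, Fin.sum_univ_three, _root_.map_mul, Complex.conj_I,
    Complex.add_re, Complex.sub_re, Complex.mul_re, Complex.mul_im, Complex.add_im,
    Complex.sub_im, Complex.I_re, Complex.I_im, Complex.div_ofNat_re, Complex.div_ofNat_im,
    Complex.neg_re, Complex.neg_im, Complex.ofReal_re, Complex.ofReal_im, map_ofNat,
    Complex.inv_re, Complex.inv_im, Complex.normSq]
  ring

lemma sqrt_tendsto_atTop : Tendsto Real.sqrt atTop atTop := by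
  apply tendsto_atTop_atTop.2
  intro b
  refine ⟨(max b 0) ^ 2, fun a ha => ?_⟩
  have h1 : max b 0 ≤ Real.sqrt a := by
    rw [show max b 0 = Real.sqrt ((max b 0) ^ 2) from (Real.sqrt_sq (le_max_right _ _)).symm]
    exact Real.sqrt_le_sqrt ha
  exact (le_max_left b 0).trans h1

theorem stmt_12 (ξ η₁ η₂ : Fin 3 → ℝ) (k L : ℝ)
    (hξ' : nrm ![ξ 0, ξ 1, 0] > 0)
    (hη₁ : η₁ = (1 / nrm ![ξ 0, ξ 1, 0]) • ![ξ 1, -ξ 0, 0])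
    (hη₂ : η₂ = crossProduct η₁ ((1 / nrm ξ) • ξ))
    (hk : 0 < k) (hL : 0 < L)
    (ζ₁ ζ₂ : ℝ → Fin 3 → ℂ)
    (hζ₁ : ∀ τ, ζ₁ τ = fun j => (ξ j : ℂ) / 2
        + (Real.sqrt (τ^2 - (nrm ξ)^2 / 4) : ℝ) * (η₁ j : ℂ)
        - Complex.I * (Real.sqrt (τ^2 - k^2) : ℝ) * (η₂ j : ℂ))
    (hζ₂ : ∀ τ, ζ₂ τ = fun j => -(ξ j : ℂ) / 2
        + (Real.sqrt (τ^2 - (nrm ξ)^2 / 4) : ℝ) * (η₁ j : ℂ)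
        + Complex.I * (Real.sqrt (τ^2 - k^2) : ℝ) * (η₂ j : ℂ)) :
    (∀ τ : ℝ, τ > max k (nrm ξ / 2) → ∀ x : Fin 3 → ℝ, 0 ≤ x 2 →
      (Complex.I * (ζ₁ τ ⬝ᵥ cv x)
        + (fun j => starRingEnd ℂ (Complex.I * ζ₂ τ j)) ⬝ᵥ cv ![x 0, x 1, 2 * L - x 2]).re
      = -2 * Real.sqrt (τ^2 - k^2) * (nrm ![ξ 0, ξ 1, 0] / nrm ξ) * (L - x 2)) ∧
    (∀ τ : ℝ, τ > max k (nrm ξ / 2) → ∀ x : Fin 3 → ℝ, 0 ≤ x 2 → x 2 ≤ L →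
      (Complex.I * (ζ₁ τ ⬝ᵥ cv x)
        + (fun j => starRingEnd ℂ (Complex.I * ζ₂ τ j)) ⬝ᵥ cv ![x 0, x 1, 2 * L - x 2]).re
      ≤ 0) ∧
    (∀ x : Fin 3 → ℝ, 0 ≤ x 2 → x 2 < L →
      Tendsto (fun τ : ℝ =>
        (Complex.I * (ζ₁ τ ⬝ᵥ cv x)
          + (fun j => starRingEnd ℂ (Complex.I * ζ₂ τ j)) ⬝ᵥ cv ![x 0, x 1, 2 * L - x 2]).re)
        atTop atBot) := by
  set n' := nrm ![ξ 0, ξ 1, 0] with hn'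
  have hs : n' ^ 2 = ξ 0 ^ 2 + ξ 1 ^ 2 := by
    rw [hn', nrm, Real.sq_sqrt (dp_self_nonneg _)]
    simp [dotProduct, Fin.sum_univ_three]; ring
  have hnξ0 : 0 ≤ nrm ξ := Real.sqrt_nonneg _
  have hnξ : 0 < nrm ξ := by
    have h1 : nrm ξ ^ 2 = ξ 0 ^ 2 + ξ 1 ^ 2 + ξ 2 ^ 2 := by
      rw [nrm, Real.sq_sqrt (dp_self_nonneg _)]
      simp [dotProduct, Fin.sum_univ_three]; ring
    nlinarith [sq_nonneg (ξ 2), mul_pos hξ' hξ']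
  have hη₂2 : η₂ 2 = n' / nrm ξ := by
    rw [hη₂, cross_apply, hη₁]
    have h1 : n' ≠ 0 := ne_of_gt hξ'
    have h2 : nrm ξ ≠ 0 := ne_of_gt hnξ
    simp only [Pi.smul_apply, smul_eq_mul, Matrix.cons_val_zero, Matrix.cons_val_one,
      Matrix.head_cons, Matrix.cons_val_two, Matrix.tail_cons]
    field_simp
    nlinarith [hs]
  have key : ∀ τ : ℝ, ∀ x : Fin 3 → ℝ,
      (Complex.I * (ζ₁ τ ⬝ᵥ cv x)
        + (fun j => starRingEnd ℂ (Complex.I * ζ₂ τ j)) ⬝ᵥ cv ![x 0, x 1, 2 * L - x 2]).re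
      = -2 * Real.sqrt (τ^2 - k^2) * (n' / nrm ξ) * (L - x 2) := by
    intro τ x
    rw [hζ₁ τ, hζ₂ τ,
      dotre (Real.sqrt (τ^2 - (nrm ξ)^2 / 4)) (Real.sqrt (τ^2 - k^2)) ξ η₁ η₂ x
        ![x 0, x 1, 2 * L - x 2]]
    simp [hη₂2]
    ring
  refine ⟨fun τ _ x _ => key τ x, fun τ hτ x hx0 hxL => ?_, fun x hx0 hxL => ?_⟩
  · rw [key τ x]
    have h1 : 0 ≤ Real.sqrt (τ^2 - k^2) := Real.sqrt_nonneg _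
    have h2 : 0 ≤ n' / nrm ξ := div_nonneg (le_of_lt hξ') hnξ0
    nlinarith [mul_nonneg (mul_nonneg h1 h2) (by linarith : (0:ℝ) ≤ L - x 2)]
  · have heq : (fun τ : ℝ =>
        (Complex.I * (ζ₁ τ ⬝ᵥ cv x)
          + (fun j => starRingEnd ℂ (Complex.I * ζ₂ τ j)) ⬝ᵥ cv ![x 0, x 1, 2 * L - x 2]).re)
        = fun τ : ℝ => Real.sqrt (τ^2 - k^2) * (-2 * (n' / nrm ξ) * (L - x 2)) := by
      funext τ; rw [key τ x]; ring
    rw [heq]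
    have hc : -2 * (n' / nrm ξ) * (L - x 2) < 0 := by
      have h2 : 0 < n' / nrm ξ := div_pos hξ' hnξ
      nlinarith
    apply Tendsto.atTop_mul_const_of_neg hc
    have h1 : Tendsto (fun τ : ℝ => τ^2 - k^2) atTop atTop :=
      tendsto_atTop_add_const_right _ _ (tendsto_pow_atTop (by norm_num))
    exact sqrt_tendsto_atTop.comp h1
end
end
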